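/- With w = 1 − √2/2 and any admissible q (w ≤ q ≤ 2w), the quantity p₂ = C(qT, wT)·C(wT, (q−w)T) / C(T, wT)² satisfies p₂ ≤ 2^{(−1+o(1))T} as T → ∞; in exponent form, q·h(w/q) + w·h((q−w)/w) − 2h(w) ≤ −1. -/
import Mathlib

lemma gibbs_term (x y : ℝ) (hx : 0 ≤ x) (hy : 0 < y) :
    x * (Real.log y - Real.log x) ≤ y - x := by
  rcases eq_or_lt_of_le hx with h | h
  · simp [← h]; linarith
  · have h1 : Real.log y - Real.log x = Real.log (y / x) := (Real.log_div hy.ne' h.ne').symm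
    have h2 : Real.log (y / x) ≤ y / x - 1 := Real.log_le_sub_one_of_pos (by positivity)
    rw [h1]
    calc x * Real.log (y/x) ≤ x * (y/x - 1) := by nlinarith
    _ = y - x := by field_simp

set_option maxHeartbeats 1000000 in
theorem stmt_8 (h : ℝ → ℝ)
    (hh : ∀ x : ℝ, h x = -x * Real.logb 2 x - (1 - x) * Real.logb 2 (1 - x))
    (w : ℝ) (hw : w = 1 - Real.sqrt 2 / 2) :
    ∀ q : ℝ, w ≤ q → q ≤ 2 * w →
      q * h (w / q) + w * h ((q - w) / w) - 2 * h w ≤ -1 := by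
  have hs2 : Real.sqrt 2 * Real.sqrt 2 = 2 := Real.mul_self_sqrt (by norm_num)
  have hs1 : (1:ℝ) < Real.sqrt 2 := by nlinarith [Real.sqrt_nonneg 2]
  have hs32 : Real.sqrt 2 < 3/2 := by nlinarith [Real.sqrt_nonneg 2]
  have hw0 : 0 < w := by rw [hw]; nlinarith
  have hL2 : 0 < Real.log 2 := Real.log_pos (by norm_num)
  have hLs : Real.log (Real.sqrt 2) = Real.log 2 / 2 := by
    rw [Real.log_sqrt (by norm_num)]
  have hLw : Real.log w = Real.log (Real.sqrt 2 - 1) - Real.log 2 / 2 := by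
    have e : w = Real.sqrt 2 * (Real.sqrt 2 - 1) / 2 := by rw [hw]; nlinarith
    rw [e, Real.log_div (ne_of_gt (by nlinarith)) (by norm_num),
      Real.log_mul (by positivity) (ne_of_gt (by nlinarith)), hLs]
    ring
  have hL3 : Real.log (3 - 2 * Real.sqrt 2) = 2 * Real.log (Real.sqrt 2 - 1) := by
    have e : (3:ℝ) - 2 * Real.sqrt 2 = (Real.sqrt 2 - 1)^2 := by nlinarith
    rw [e, Real.log_pow]; push_cast; ring
  have hLs1 : Real.log (Real.sqrt 2 - 1) ≤ 0 :=
    Real.log_nonpos (by nlinarith) (by nlinarith)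
  have e1w : (1:ℝ) - w = Real.sqrt 2 / 2 := by rw [hw]; ring
  have hlb12 : Real.logb 2 (Real.sqrt 2 / 2) = -(1/2) := by
    rw [← Real.log_div_log, Real.log_div (by positivity) (by norm_num), hLs]
    rw [div_eq_iff hL2.ne']; ring
  intro q hq1 hq2
  rcases eq_or_lt_of_le hq1 with h1 | h1
  · -- q = w
    subst h1
    rw [div_self hw0.ne', show (w - w)/w = 0 by simp, hh 1, hh 0, hh w, e1w, hlb12]
    simp only [Real.logb_one, Real.logb_zero]
    norm_num
    have hlbw : Real.logb 2 w ≤ -(1/2) := by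
      rw [← Real.log_div_log, div_le_iff₀ hL2]
      nlinarith [hLw, hLs1]
    nlinarith [mul_le_mul_of_nonneg_left hlbw hw0.le, hw]
  rcases eq_or_lt_of_le hq2 with h2 | h2
  · -- q = 2w
    subst h2
    rw [show w / (2*w) = 1/2 by rw [div_eq_div_iff (by positivity) (by norm_num)]; ring,
      show (2*w - w)/w = 1 by field_simp; ring, hh (1/2), hh 1, hh w, e1w, hlb12]
    have hlbhalf : Real.logb 2 (1/2 : ℝ) = -1 := by
      rw [one_div, Real.logb_inv, Real.logb_self_eq_one] <;> norm_num
    rw [hlbhalf]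
    simp only [Real.logb_one, Real.logb_zero]
    norm_num
    have hlbw : Real.logb 2 w ≤ -(3/2) := by
      rw [← Real.log_div_log, div_le_iff₀ hL2]
      have : Real.log (Real.sqrt 2 - 1) ≤ Real.log (1/2) := by
        apply Real.log_le_log (by nlinarith) (by nlinarith)
      rw [show (1:ℝ)/2 = 2⁻¹ by norm_num, Real.log_inv] at this
      nlinarith [hLw]
    nlinarith [mul_le_mul_of_nonneg_left hlbw hw0.le, hw]
  -- interior: w < q < 2w
  have hq0 : 0 < q := lt_trans hw0 h1
  have ha0 : 0 < q - w := by linarith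
  have hb0 : 0 < 2*w - q := by linarith
  have hr1 : 0 < Real.sqrt 2 - 1 := by linarith
  have hr3 : 0 < 3 - 2*Real.sqrt 2 := by nlinarith
  have e1 : 1 - w/q = (q-w)/q := by field_simp
  have e2 : 1 - (q-w)/w = (2*w-q)/w := by field_simp; ring
  have goal_eq : q * h (w / q) + w * h ((q - w) / w) - 2 * h w
      = q * Real.logb 2 q - 2*(q-w) * Real.logb 2 (q-w) - (2*w-q) * Real.logb 2 (2*w-q)
        + 2*w * Real.logb 2 w - (1-w) := by
    rw [hh, hh, hh, e1, e2, Real.logb_div hw0.ne' hq0.ne', Real.logb_div ha0.ne' hq0.ne',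
      Real.logb_div ha0.ne' hw0.ne', Real.logb_div hb0.ne' hw0.ne', e1w, hlb12]
    field_simp
    ring
  have g1 := gibbs_term (q-w) (q*(Real.sqrt 2 - 1)) ha0.le (by positivity)
  have g2 := gibbs_term (2*w-q) (q*(3 - 2*Real.sqrt 2)) hb0.le (by positivity)
  rw [Real.log_mul hq0.ne' hr1.ne'] at g1
  rw [Real.log_mul hq0.ne' hr3.ne', hL3] at g2
  have key : q * Real.log q - 2*(q-w)*Real.log (q-w) - (2*w-q)*Real.log (2*w-q)
      + 2*w*Real.log w + w*Real.log 2 ≤ 0 := by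
    rw [hLw]; nlinarith [g1, g2]
  have keyb : q * Real.logb 2 q - 2*(q-w) * Real.logb 2 (q-w) - (2*w-q) * Real.logb 2 (2*w-q)
      + 2*w * Real.logb 2 w + w ≤ 0 := by
    have hdiv : (q * Real.log q - 2*(q-w)*Real.log (q-w) - (2*w-q)*Real.log (2*w-q)
        + 2*w*Real.log w + w*Real.log 2) / Real.log 2 ≤ 0 :=
      div_nonpos_of_nonpos_of_nonneg key hL2.le
    have e : (q * Real.log q - 2*(q-w)*Real.log (q-w) - (2*w-q)*Real.log (2*w-q)
        + 2*w*Real.log w + w*Real.log 2) / Real.log 2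
        = q * Real.logb 2 q - 2*(q-w) * Real.logb 2 (q-w) - (2*w-q) * Real.logb 2 (2*w-q)
        + 2*w * Real.logb 2 w + w := by
      simp only [← Real.log_div_log]
      field_simp
    rwa [e] at hdiv
  rw [goal_eq]
  linarith [keyb]
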